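/- Let c > 0 and define r(ρ,z) = log(1+ρz)/log 2 − c·√(1 − (1+ρz)^{-2}) for ρ > 0, z > 0, and E(ρ) = ∫_0^∞ r(ρ,z)·e^{−z} dz. Then ρ / E(ρ) tends to 0 as ρ tends to 0 from the right. -/

import Mathlib

set_option maxHeartbeats 800000

open MeasureTheory Filter Set

private lemma aux_int_exp : IntegrableOn (fun z : ℝ => Real.exp (-z)) (Set.Ioi 0) := by
  have h := exp_neg_integrableOn_Ioi 0 (b := 1) one_pos
  simpa using h

private lemma aux_int_zexp : IntegrableOn (fun z : ℝ => z * Real.exp (-z)) (Set.Ioi 0) := by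
  have h := Real.GammaIntegral_convergent (s := 2) (by norm_num)
  refine h.congr_fun (fun x hx => ?_) measurableSet_Ioi
  have : ((2:ℝ) - 1) = 1 := by norm_num
  simp only [this, Real.rpow_one]
  ring

private lemma aux_sqrt_arg_nonneg {x : ℝ} (hx : 0 ≤ x) :
    0 ≤ 1 - 1 / (1 + x) ^ 2 := by
  have h1 : (1:ℝ) ≤ (1 + x) ^ 2 := by nlinarith
  have h2 : (1:ℝ) / (1 + x) ^ 2 ≤ 1 := by
    rw [div_le_one (by nlinarith)]; exact h1
  linarith

private lemma aux_sqrt_arg_le_one {x : ℝ} (hx : 0 ≤ x) :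
    1 - 1 / (1 + x) ^ 2 ≤ 1 := by
  have : (0:ℝ) ≤ 1 / (1 + x) ^ 2 := by positivity
  linarith

/-- with E(ρ) = ∫_0^∞ r(ρ,z) e^{-z} dz the mean finite-blocklength rate,
ρ/E(ρ) tends to 0 as ρ → 0⁺. -/
theorem snr_div_mean_rate_tendsto_zero
    (c : ℝ) (hc : 0 < c)
    (r : ℝ → ℝ → ℝ)
    (hr : ∀ ρ ∈ Set.Ioi (0:ℝ), ∀ z ∈ Set.Ioi (0:ℝ),
      r ρ z = Real.log (1 + ρ * z) / Real.log 2
        - c * Real.sqrt (1 - 1 / (1 + ρ * z) ^ 2))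
    (E : ℝ → ℝ)
    (hE : ∀ ρ ∈ Set.Ioi (0:ℝ), E ρ = ∫ z in Set.Ioi (0:ℝ), r ρ z * Real.exp (-z)) :
    Tendsto (fun ρ => ρ / E ρ) (nhdsWithin 0 (Set.Ioi 0)) (nhds 0) := by
  have hL : (0:ℝ) < Real.log 2 := Real.log_pos one_lt_two
  set L := Real.log 2 with hLdef
  set M := ∫ z in Set.Ioi (0:ℝ), z * Real.exp (-z) with hMdef
  have hM0 : 0 ≤ M := by
    apply setIntegral_nonneg measurableSet_Ioi
    intro x hx
    have : (0:ℝ) < x := hx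
    positivity
  set K := c * Real.exp (-1) / 8 with hKdef
  have hK : 0 < K := by positivity
  -- Main bound : for 0 < ρ ≤ 1, E ρ ≤ ρ * (M / L) - 2 * K * √ρ
  have key : ∀ ρ : ℝ, 0 < ρ → ρ ≤ 1 →
      E ρ ≤ ρ * (M / L) - 2 * K * Real.sqrt ρ := by
    intro ρ hρ hρ1
    set f1 : ℝ → ℝ := fun z => Real.log (1 + ρ * z) / L * Real.exp (-z) with hf1
    set f2 : ℝ → ℝ := fun z => c * Real.sqrt (1 - 1 / (1 + ρ * z) ^ 2) * Real.exp (-z)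
      with hf2
    have hI1 : IntegrableOn f1 (Set.Ioi 0) := by
      refine Integrable.mono' ((aux_int_zexp.const_mul (ρ / L)))
        ?_ ?_
      · exact (((Real.measurable_log.comp (measurable_const.add
          (measurable_id.const_mul ρ))).div_const L).mul
          (Real.measurable_exp.comp measurable_neg)).aestronglyMeasurable
      · filter_upwards [ae_restrict_mem measurableSet_Ioi] with z hz
        have hz0 : (0:ℝ) < z := hz
        have hx : 0 ≤ ρ * z := by positivity
        have hlog0 : 0 ≤ Real.log (1 + ρ * z) := Real.log_nonneg (by linarith)
        have hlog : Real.log (1 + ρ * z) ≤ ρ * z := by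
          have := Real.log_le_sub_one_of_pos (x := 1 + ρ * z) (by linarith)
          linarith
        have hle : Real.log (1 + ρ * z) / L ≤ ρ / L * z := by
          rw [div_le_iff₀ hL] at *
          calc Real.log (1 + ρ * z) ≤ ρ * z := hlog
          _ = ρ / L * z * L := by field_simp
        have hexp : (0:ℝ) < Real.exp (-z) := Real.exp_pos _
        rw [Real.norm_eq_abs, abs_of_nonneg (by positivity)]
        calc Real.log (1 + ρ * z) / L * Real.exp (-z)
            ≤ ρ / L * z * Real.exp (-z) := by
              exact mul_le_mul_of_nonneg_right hle hexp.le
          _ = ρ / L * (z * Real.exp (-z)) := by ring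
    have hI2 : IntegrableOn f2 (Set.Ioi 0) := by
      refine Integrable.mono' (aux_int_exp.const_mul c) ?_ ?_
      · have m1 : Measurable fun z : ℝ => (1 + ρ * z) ^ 2 :=
          (measurable_const.add (measurable_id.const_mul ρ)).pow_const 2
        have m2 : Measurable fun z : ℝ => 1 - 1 / (1 + ρ * z) ^ 2 :=
          measurable_const.sub (measurable_const.div m1)
        exact ((measurable_const.mul (m2.sqrt)).mul
          (Real.measurable_exp.comp measurable_neg)).aestronglyMeasurable
      · filter_upwards [ae_restrict_mem measurableSet_Ioi] with z hz
        have hz0 : (0:ℝ) < z := hz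
        have hx : 0 ≤ ρ * z := by positivity
        have hs1 : Real.sqrt (1 - 1 / (1 + ρ * z) ^ 2) ≤ 1 := by
          have := Real.sqrt_le_sqrt (aux_sqrt_arg_le_one hx)
          simpa using this
        have hs0 : 0 ≤ Real.sqrt (1 - 1 / (1 + ρ * z) ^ 2) := Real.sqrt_nonneg _
        have hexp : (0:ℝ) < Real.exp (-z) := Real.exp_pos _
        rw [Real.norm_eq_abs, abs_of_nonneg (by positivity)]
        calc c * Real.sqrt (1 - 1 / (1 + ρ * z) ^ 2) * Real.exp (-z)
            ≤ c * 1 * Real.exp (-z) := by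
              apply mul_le_mul_of_nonneg_right _ hexp.le
              exact mul_le_mul_of_nonneg_left hs1 hc.le
          _ = c * Real.exp (-z) := by ring
    have hEρ : E ρ = (∫ z in Set.Ioi (0:ℝ), f1 z) - ∫ z in Set.Ioi (0:ℝ), f2 z := by
      rw [hE ρ hρ, ← integral_sub hI1 hI2]
      apply setIntegral_congr_fun measurableSet_Ioi
      intro z hz
      show r ρ z * Real.exp (-z) = f1 z - f2 z
      rw [hr ρ hρ z hz]
      simp only [hf1, hf2]
      ring
    -- bound on ∫ f1
    have hF1 : (∫ z in Set.Ioi (0:ℝ), f1 z) ≤ ρ * (M / L) := by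
      have h1 : (∫ z in Set.Ioi (0:ℝ), f1 z)
          ≤ ∫ z in Set.Ioi (0:ℝ), ρ / L * (z * Real.exp (-z)) := by
        refine setIntegral_mono_on hI1 (aux_int_zexp.const_mul (ρ / L))
          measurableSet_Ioi ?_
        intro z hz
        have hz0 : (0:ℝ) < z := hz
        have hlog : Real.log (1 + ρ * z) ≤ ρ * z := by
          have := Real.log_le_sub_one_of_pos (x := 1 + ρ * z) (by nlinarith)
          linarith
        have hexp : (0:ℝ) < Real.exp (-z) := Real.exp_pos _
        have hle : Real.log (1 + ρ * z) / L ≤ ρ / L * z := by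
          rw [div_le_iff₀ hL] at *
          calc Real.log (1 + ρ * z) ≤ ρ * z := hlog
          _ = ρ / L * z * L := by field_simp
        calc f1 z = Real.log (1 + ρ * z) / L * Real.exp (-z) := rfl
          _ ≤ ρ / L * z * Real.exp (-z) := mul_le_mul_of_nonneg_right hle hexp.le
          _ = ρ / L * (z * Real.exp (-z)) := by ring
      rw [integral_const_mul] at h1
      calc (∫ z in Set.Ioi (0:ℝ), f1 z) ≤ ρ / L * M := h1
        _ = ρ * (M / L) := by ring
    -- bound on ∫ f2
    have hF2 : 2 * K * Real.sqrt ρ ≤ ∫ z in Set.Ioi (0:ℝ), f2 z := by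
      have hsub : Set.Ioc (1/2 : ℝ) 1 ⊆ Set.Ioi (0:ℝ) := fun x hx => by
        simp only [Set.mem_Ioi]; have := hx.1; linarith [hx.1]
      have hstep1 : (∫ z in Set.Ioc (1/2:ℝ) 1, f2 z) ≤ ∫ z in Set.Ioi (0:ℝ), f2 z := by
        refine setIntegral_mono_set hI2 ?_ (HasSubset.Subset.eventuallyLE hsub)
        filter_upwards with z
        have : 0 ≤ Real.sqrt (1 - 1 / (1 + ρ * z) ^ 2) := Real.sqrt_nonneg _
        have : (0:ℝ) < Real.exp (-z) := Real.exp_pos _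
        positivity
      have hstep2 : (∫ z in Set.Ioc (1/2:ℝ) 1,
          (c * (Real.sqrt ρ / 2) * Real.exp (-1) : ℝ)) ≤ ∫ z in Set.Ioc (1/2:ℝ) 1, f2 z := by
        refine setIntegral_mono_on ((integrableOn_const_iff (by finiteness)).mpr (Or.inr ?_))
          (hI2.mono_set hsub) measurableSet_Ioc ?_
        · rw [Real.volume_Ioc]; exact ENNReal.ofReal_lt_top
        · intro z hz
          obtain ⟨hz1, hz2⟩ := hz
          have hz0 : (0:ℝ) < z := by linarith
          set x := ρ * z with hxdef
          have hx0 : 0 < x := by positivity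
          have hxρ : ρ / 2 ≤ x := by
            rw [hxdef]; nlinarith
          have hx1 : x ≤ 1 := by rw [hxdef]; nlinarith
          have h4 : (1 + x) ^ 2 ≤ 4 := by nlinarith
          have hp : (0:ℝ) < (1 + x) ^ 2 := by positivity
          have hinv : 1 / (1 + x) ^ 2 * (1 + x) ^ 2 = 1 := by field_simp
          have hquarter : (1:ℝ)/4 ≤ 1 / (1 + x) ^ 2 :=
            one_div_le_one_div_of_le hp h4
          have ht0 : (0:ℝ) < 1 / (1 + x) ^ 2 := by positivity
          have harg : ρ / 4 ≤ 1 - 1 / (1 + x) ^ 2 := by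
            nlinarith [hinv, hquarter, hxρ, hx0, ht0]
          have hsq : Real.sqrt ρ / 2 ≤ Real.sqrt (1 - 1 / (1 + x) ^ 2) := by
            have h1 : Real.sqrt (ρ / 4) ≤ Real.sqrt (1 - 1 / (1 + x) ^ 2) :=
              Real.sqrt_le_sqrt harg
            have h2 : Real.sqrt (ρ / 4) = Real.sqrt ρ / 2 := by
              rw [Real.sqrt_div hρ.le,
                show (4:ℝ) = 2^2 by norm_num, Real.sqrt_sq (by norm_num : (0:ℝ) ≤ 2)]
            linarith
          have hexp : Real.exp (-1) ≤ Real.exp (-z) :=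
            Real.exp_le_exp.mpr (by linarith)
          have hexp0 : (0:ℝ) < Real.exp (-1) := Real.exp_pos _
          calc c * (Real.sqrt ρ / 2) * Real.exp (-1)
              ≤ c * Real.sqrt (1 - 1 / (1 + x) ^ 2) * Real.exp (-1) := by
                apply mul_le_mul_of_nonneg_right _ hexp0.le
                exact mul_le_mul_of_nonneg_left hsq hc.le
            _ ≤ c * Real.sqrt (1 - 1 / (1 + x) ^ 2) * Real.exp (-z) := by
                apply mul_le_mul_of_nonneg_left hexp
                positivity
      have hconst : (∫ z in Set.Ioc (1/2:ℝ) 1,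
          (c * (Real.sqrt ρ / 2) * Real.exp (-1) : ℝ)) = 2 * K * Real.sqrt ρ := by
        rw [setIntegral_const, measureReal_def, Real.volume_Ioc]
        rw [ENNReal.toReal_ofReal (by norm_num)]
        rw [smul_eq_mul, hKdef]
        ring
      linarith
    rw [hEρ]; linarith
  -- choose δ
  set δ : ℝ := min 1 ((K / (M / L + 1)) ^ 2) with hδdef
  have hML : (0:ℝ) < M / L + 1 := by positivity
  have hδ : 0 < δ := by
    apply lt_min one_pos
    positivity
  have hbound : ∀ ρ : ℝ, ρ ∈ Set.Ioo 0 δ → E ρ ≤ -(K * Real.sqrt ρ) := by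
    intro ρ ⟨hρ0, hρδ⟩
    have hρ1 : ρ ≤ 1 := le_trans hρδ.le (min_le_left _ _)
    have hρK : ρ < (K / (M / L + 1)) ^ 2 := lt_of_lt_of_le hρδ (min_le_right _ _)
    have hsρ : Real.sqrt ρ ≤ K / (M / L + 1) := by
      have := Real.sqrt_le_sqrt hρK.le
      rwa [Real.sqrt_sq (by positivity)] at this
    have hsρ0 : 0 < Real.sqrt ρ := Real.sqrt_pos.mpr hρ0
    have hsq : Real.sqrt ρ * Real.sqrt ρ = ρ := Real.mul_self_sqrt hρ0.le
    have h1 : ρ * (M / L) ≤ K * Real.sqrt ρ := by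
      have h2 : ρ * (M / L + 1) ≤ K * Real.sqrt ρ := by
        calc ρ * (M / L + 1) = Real.sqrt ρ * (Real.sqrt ρ * (M / L + 1)) := by
              rw [← mul_assoc, hsq]
          _ ≤ Real.sqrt ρ * (K / (M / L + 1) * (M / L + 1)) := by
              apply mul_le_mul_of_nonneg_left _ hsρ0.le
              exact mul_le_mul_of_nonneg_right hsρ hML.le
          _ = K * Real.sqrt ρ := by field_simp
      nlinarith
    have := key ρ hρ0 hρ1
    linarith
  -- final squeeze
  apply squeeze_zero_norm' (a := fun ρ => Real.sqrt ρ / K)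
  · have hmem : Set.Ioo (0:ℝ) δ ∈ nhdsWithin 0 (Set.Ioi 0) :=
      Ioo_mem_nhdsGT hδ
    filter_upwards [hmem] with ρ hρ
    obtain ⟨hρ0, hρδ⟩ := hρ
    have hEb := hbound ρ ⟨hρ0, hρδ⟩
    have hsρ0 : 0 < Real.sqrt ρ := Real.sqrt_pos.mpr hρ0
    have hEneg : E ρ < 0 := lt_of_le_of_lt hEb (by nlinarith)
    rw [Real.norm_eq_abs, abs_div, abs_of_pos hρ0, abs_of_neg hEneg]
    rw [div_le_div_iff₀ (by linarith) hK]
    have hsq : Real.sqrt ρ * Real.sqrt ρ = ρ := Real.mul_self_sqrt hρ0.le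
    nlinarith
  · have h1 : Tendsto (fun ρ : ℝ => Real.sqrt ρ / K) (nhds 0) (nhds 0) := by
      have := (Real.continuous_sqrt.tendsto' 0 0 (by simp)).div_const K
      simpa using this
    exact h1.mono_left nhdsWithin_le_nhds
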